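/- For every positive integer n there exist finite sets A, B ⊆ ℤ and G ⊆ A × B such that #A ≤ 3^n, #B ≤ 3^n, #{a + b : (a,b) ∈ G} ≤ 3^n, and #{a − b : (a,b) ∈ G} = 6^n. Explicitly, taking M ≥ 7, one may take A = B to be the set of integers 0 ≤ a < M^n all of whose base-M digits lie in {0,1,3}, and G = {(a,b) ∈ A × B : the i-th base-M digits of a and b differ for all 0 ≤ i < n}. -/

import Mathlib

open Finset

namespace RuzsaAux

lemma ediv_ediv (a b c : ℤ) (hb : 0 < b) (hc : 0 < c) : a / b / c = a / (b * c) := by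
  have hbc : 0 < b * c := mul_pos hb hc
  have h1 : b * (a / b) ≤ a := Int.mul_ediv_self_le hb.ne'
  have h2 : a < b * (a / b) + b := Int.lt_mul_ediv_self_add hb
  have h3 : c * (a / b / c) ≤ a / b := Int.mul_ediv_self_le hc.ne'
  have h4 : a / b < c * (a / b / c) + c := Int.lt_mul_ediv_self_add hc
  have hle : (a / b / c) ≤ a / (b * c) := by
    rw [Int.le_ediv_iff_mul_le hbc]; nlinarith
  have hge : a / (b * c) < a / b / c + 1 := by
    rw [Int.ediv_lt_iff_lt_mul hbc]; nlinarith
  omega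

variable (K : ℤ)

lemma sum_shift (e : ℕ → ℤ) (n : ℕ) :
    ∑ i ∈ range (n+1), e i * K ^ i
      = e 0 + K * ∑ i ∈ range n, e (i+1) * K ^ i := by
  rw [Finset.sum_range_succ']
  simp only [pow_succ, pow_zero, mul_one, Finset.mul_sum]
  rw [add_comm]
  congr 1
  apply Finset.sum_congr rfl
  intro i _
  ring

lemma sum_bounds (hK : 0 < K) :
    ∀ (n : ℕ) (e : ℕ → ℤ), (∀ i < n, 0 ≤ e i ∧ e i < K) →
      0 ≤ ∑ i ∈ range n, e i * K ^ i ∧ ∑ i ∈ range n, e i * K ^ i < K ^ n := by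
  intro n
  induction n with
  | zero => intro e _; simp
  | succ m ih =>
    intro e he
    have hT := ih (fun i => e (i+1)) (fun i hi => he (i+1) (by omega))
    beta_reduce at hT
    have h0 := he 0 (by omega)
    rw [sum_shift]
    constructor
    · nlinarith [hT.1, h0.1, hK]
    · have : K * (∑ i ∈ range m, e (i+1) * K ^ i) ≤ K * (K ^ m - 1) := by
        apply mul_le_mul_of_nonneg_left (by omega) hK.le
      rw [pow_succ]
      nlinarith [h0.2]

lemma digit_of_sum (hK : 0 < K) :
    ∀ (j n : ℕ) (e : ℕ → ℤ), (∀ i < n, 0 ≤ e i ∧ e i < K) → j < n →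
      (∑ i ∈ range n, e i * K ^ i) / K ^ j % K = e j := by
  intro j
  induction j with
  | zero =>
    intro n e he hj
    obtain ⟨m, rfl⟩ : ∃ m, n = m + 1 := ⟨n - 1, by omega⟩
    rw [sum_shift, pow_zero, Int.ediv_one, Int.add_mul_emod_self_left]
    exact Int.emod_eq_of_lt (he 0 (by omega)).1 (he 0 (by omega)).2
  | succ j ihj =>
    intro n e he hj
    obtain ⟨m, rfl⟩ : ∃ m, n = m + 1 := ⟨n - 1, by omega⟩
    rw [sum_shift]
    have h1 : (e 0 + K * ∑ i ∈ range m, e (i+1) * K ^ i) / K ^ (j+1)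
        = (∑ i ∈ range m, e (i+1) * K ^ i) / K ^ j := by
      rw [pow_succ, mul_comm (K ^ j) K, ← ediv_ediv _ _ _ hK (pow_pos hK j)]
      congr 1
      rw [Int.add_mul_ediv_left _ _ hK.ne',
        Int.ediv_eq_zero_of_lt (he 0 (by omega)).1 (he 0 (by omega)).2, zero_add]
    rw [h1]
    have := ihj m (fun i => e (i+1)) (fun i hi => he (i+1) (by omega)) (by omega)
    beta_reduce at this
    exact this

lemma eq_zero_of_sum_eq_zero (hK : 0 < K) :
    ∀ (n : ℕ) (c : ℕ → ℤ), (∀ i < n, |c i| < K) →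
      (∑ i ∈ range n, c i * K ^ i) = 0 → ∀ i < n, c i = 0 := by
  intro n
  induction n with
  | zero => intro c _ _ i hi; omega
  | succ m ih =>
    intro c hc hs
    rw [sum_shift] at hs
    set T := ∑ i ∈ range m, c (i+1) * K ^ i with hT
    have hc0 : c 0 = -(K * T) := by linarith
    have habs : |c 0| = K * |T| := by
      rw [hc0, abs_neg, abs_mul, abs_of_pos hK]
    have hT0 : T = 0 := by
      by_contra h
      have h1 : 1 ≤ |T| := Int.one_le_abs (by omega)
      have h2 : K ≤ K * |T| := by nlinarith
      have h3 := hc 0 (by omega)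
      omega
    have hc00 : c 0 = 0 := by rw [hc0, hT0]; ring
    have htail := ih (fun i => c (i+1)) (fun i hi => hc (i+1) (by omega))
      (by beta_reduce; rw [← hT, hT0])
    beta_reduce at htail
    intro i hi
    cases i with
    | zero => exact hc00
    | succ k => exact htail k (by omega)

lemma self_eq_sum_digits (hK : 0 < K) :
    ∀ (n : ℕ) (a : ℤ), 0 ≤ a → a < K ^ n →
      a = ∑ i ∈ range n, (a / K ^ i % K) * K ^ i := by
  intro n
  induction n with
  | zero => intro a h0 h1; simp at h1 ⊢; omega
  | succ m ih =>
    intro a h0 h1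
    rw [sum_shift]
    have hdiv : ∀ i : ℕ, a / K ^ (i+1) = (a / K) / K ^ i := by
      intro i
      rw [pow_succ, mul_comm, ediv_ediv _ _ _ hK (pow_pos hK i)]
    have h2 : 0 ≤ a / K := Int.ediv_nonneg h0 hK.le
    have h3 : a / K < K ^ m := by
      rw [Int.ediv_lt_iff_lt_mul hK]
      calc a < K ^ (m+1) := h1
      _ = K ^ m * K := by rw [pow_succ]
    have hrec := ih (a / K) h2 h3
    have hsum : ∑ i ∈ range m, (a / K ^ (i+1) % K) * K ^ i
        = ∑ i ∈ range m, ((a / K) / K ^ i % K) * K ^ i := by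
      apply Finset.sum_congr rfl
      intro i _
      rw [hdiv]
    calc a = a % K + K * (a / K) := (Int.emod_add_mul_ediv a K).symm
    _ = a / K ^ 0 % K + K * ∑ i ∈ range m, (a / K ^ (i+1) % K) * K ^ i := by
        rw [pow_zero, Int.ediv_one, hsum, ← hrec]

lemma card_le_of_digits (hK : 0 < K) (n : ℕ) (T F : Finset ℤ)
    (h : ∀ t ∈ T, 0 ≤ t ∧ t < K ^ n ∧ ∀ i < n, t / K ^ i % K ∈ F) :
    T.card ≤ F.card ^ n := by
  classical
  have key : T.card ≤ (Fintype.piFinset fun _ : Fin n => F).card := by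
    apply Finset.card_le_card_of_injOn (fun t => fun i : Fin n => t / K ^ (i : ℕ) % K)
    · intro t ht
      rw [Finset.mem_coe, Fintype.mem_piFinset]
      intro i
      exact (h t ht).2.2 i i.isLt
    · intro t1 h1 t2 h2 heq
      obtain ⟨ha1, hb1, -⟩ := h t1 h1
      obtain ⟨ha2, hb2, -⟩ := h t2 h2
      rw [self_eq_sum_digits K hK n t1 ha1 hb1, self_eq_sum_digits K hK n t2 ha2 hb2]
      apply Finset.sum_congr rfl
      intro i hi
      rw [Finset.mem_range] at hi
      have := congrFun heq ⟨i, hi⟩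
      simp only at this
      rw [this]
  calc T.card ≤ _ := key
  _ = F.card ^ n := by rw [Fintype.card_piFinset]; simp

def pick (v : ℤ) : ℤ × ℤ :=
  if v = 1 then (1,0) else if v = -1 then (0,1) else if v = 2 then (3,1)
  else if v = -2 then (1,3) else if v = 3 then (3,0) else (0,3)

lemma pick_spec {v : ℤ} (hv : v ∈ ({1,-1,2,-2,3,-3} : Finset ℤ)) :
    (pick v).1 ∈ ({0,1,3}:Finset ℤ) ∧ (pick v).2 ∈ ({0,1,3}:Finset ℤ) ∧
    (pick v).1 ≠ (pick v).2 ∧ (pick v).1 - (pick v).2 = v := by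
  simp only [Finset.mem_insert, Finset.mem_singleton] at hv
  rcases hv with rfl|rfl|rfl|rfl|rfl|rfl <;> decide

lemma digit_cases {x y : ℤ} (hx : x ∈ ({0,1,3}:Finset ℤ)) (hy : y ∈ ({0,1,3}:Finset ℤ))
    (hxy : x ≠ y) :
    x + y ∈ ({1,3,4} : Finset ℤ) ∧ x - y ∈ ({1,-1,2,-2,3,-3} : Finset ℤ) := by
  simp only [Finset.mem_insert, Finset.mem_singleton] at hx hy
  rcases hx with rfl|rfl|rfl <;> rcases hy with rfl|rfl|rfl <;> simp_all

end RuzsaAux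

open RuzsaAux in
/-- **Katz–Tao, first converse example (Ruzsa-type).**  For every positive integer `n`
there exist finite sets `A, B ⊆ ℤ` and `G ⊆ A × B` with `#A ≤ 3ⁿ`, `#B ≤ 3ⁿ`,
`#{a + b : (a,b) ∈ G} ≤ 3ⁿ`, and `#{a - b : (a,b) ∈ G} = 6ⁿ`.  Explicitly, for any
`M ≥ 7` one may take `A = B` to be the integers `0 ≤ a < Mⁿ` all of whose base-`M`
digits lie in `{0,1,3}` and `G` the set of pairs whose base-`M` digits differ in every
position `i < n` (the `i`-th base-`M` digit of `a` being `a / Mⁱ % M`). -/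
theorem ruzsa_example_sum (n M : ℕ) (hn : 0 < n) (hM : 7 ≤ M)
    (A B : Finset ℤ)
    (hA : A = (Finset.Ico (0 : ℤ) ((M : ℤ) ^ n)).filter
      (fun a => ∀ i < n, a / (M : ℤ) ^ i % (M : ℤ) ∈ ({0, 1, 3} : Finset ℤ)))
    (hB : B = A)
    (G : Finset (ℤ × ℤ))
    (hG : G = (A ×ˢ B).filter
      (fun p => ∀ i < n, p.1 / (M : ℤ) ^ i % (M : ℤ) ≠ p.2 / (M : ℤ) ^ i % (M : ℤ))) :
    G ⊆ A ×ˢ B ∧ A.card ≤ 3 ^ n ∧ B.card ≤ 3 ^ n ∧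
      (G.image (fun p => p.1 + p.2)).card ≤ 3 ^ n ∧
      (G.image (fun p => p.1 - p.2)).card = 6 ^ n := by
  classical
  have hM7 : (7:ℤ) ≤ (M:ℤ) := by exact_mod_cast hM
  have hMpos : (0:ℤ) < (M:ℤ) := by omega
  have memA : ∀ a : ℤ, a ∈ A ↔
      0 ≤ a ∧ a < (M:ℤ) ^ n ∧ ∀ i < n, a / (M:ℤ) ^ i % (M:ℤ) ∈ ({0,1,3} : Finset ℤ) := by
    intro a
    rw [hA]
    simp [Finset.mem_filter, Finset.mem_Ico, and_assoc]
  have memG : ∀ p : ℤ × ℤ, p ∈ G ↔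
      p.1 ∈ A ∧ p.2 ∈ A ∧ ∀ i < n, p.1 / (M:ℤ) ^ i % (M:ℤ) ≠ p.2 / (M:ℤ) ^ i % (M:ℤ) := by
    intro p
    rw [hG, hB]
    simp [Finset.mem_filter, Finset.mem_product, and_assoc]
  have Dbound : ∀ v : ℤ, v ∈ ({0,1,3} : Finset ℤ) → 0 ≤ v ∧ v < (M:ℤ) := by
    intro v hv
    simp only [Finset.mem_insert, Finset.mem_singleton] at hv
    rcases hv with rfl|rfl|rfl <;> omega
  have hD3 : ({0,1,3} : Finset ℤ).card = 3 := by decide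
  have hE3 : ({1,3,4} : Finset ℤ).card = 3 := by decide
  have hS6 : ({1,-1,2,-2,3,-3} : Finset ℤ).card = 6 := by decide
  refine ⟨?_, ?_, ?_, ?_, ?_⟩
  · rw [hG]; exact Finset.filter_subset _ _
  · have := card_le_of_digits (M:ℤ) hMpos n A ({0,1,3}) (fun t ht => (memA t).mp ht)
    rwa [hD3] at this
  · rw [hB]
    have := card_le_of_digits (M:ℤ) hMpos n A ({0,1,3}) (fun t ht => (memA t).mp ht)
    rwa [hD3] at this
  · -- sums
    have := card_le_of_digits (M:ℤ) hMpos n (G.image (fun p => p.1 + p.2)) ({1,3,4}) ?_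
    · rwa [hE3] at this
    intro t ht
    rw [Finset.mem_image] at ht
    obtain ⟨p, hp, rfl⟩ := ht
    obtain ⟨hpa, hpb, hpd⟩ := (memG p).mp hp
    obtain ⟨ha0, ha1, had⟩ := (memA p.1).mp hpa
    obtain ⟨hb0, hb1, hbd⟩ := (memA p.2).mp hpb
    set e : ℕ → ℤ := fun i => p.1 / (M:ℤ) ^ i % (M:ℤ) + p.2 / (M:ℤ) ^ i % (M:ℤ) with he
    have heE : ∀ i < n, e i ∈ ({1,3,4}:Finset ℤ) := fun i hi =>
      (digit_cases (had i hi) (hbd i hi) (hpd i hi)).1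
    have hebd : ∀ i < n, 0 ≤ e i ∧ e i < (M:ℤ) := by
      intro i hi
      have h := heE i hi
      simp only [Finset.mem_insert, Finset.mem_singleton] at h
      rcases h with h|h|h <;> rw [h] <;> omega
    have hsum : p.1 + p.2 = ∑ i ∈ range n, e i * (M:ℤ) ^ i := by
      conv_lhs => rw [self_eq_sum_digits (M:ℤ) hMpos n p.1 ha0 ha1,
        self_eq_sum_digits (M:ℤ) hMpos n p.2 hb0 hb1]
      rw [← Finset.sum_add_distrib]
      apply Finset.sum_congr rfl
      intro i _
      rw [he]
      ring
    refine ⟨?_, ?_, ?_⟩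
    · rw [hsum]; exact (sum_bounds (M:ℤ) hMpos n e hebd).1
    · rw [hsum]; exact (sum_bounds (M:ℤ) hMpos n e hebd).2
    · intro i hi
      rw [hsum, digit_of_sum (M:ℤ) hMpos i n e hebd hi]
      exact heE i hi
  · -- differences
    set Φ : (Fin n → ℤ) → ℤ :=
      fun f => ∑ i ∈ range n, (if h : i < n then f ⟨i, h⟩ else 0) * (M:ℤ) ^ i with hΦ
    have himg : G.image (fun p => p.1 - p.2)
        = (Fintype.piFinset fun _ : Fin n => ({1,-1,2,-2,3,-3} : Finset ℤ)).image Φ := by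
      ext t
      simp only [Finset.mem_image]
      constructor
      · rintro ⟨p, hp, rfl⟩
        obtain ⟨hpa, hpb, hpd⟩ := (memG p).mp hp
        obtain ⟨ha0, ha1, had⟩ := (memA p.1).mp hpa
        obtain ⟨hb0, hb1, hbd⟩ := (memA p.2).mp hpb
        refine ⟨fun i => p.1 / (M:ℤ) ^ (i:ℕ) % (M:ℤ) - p.2 / (M:ℤ) ^ (i:ℕ) % (M:ℤ), ?_, ?_⟩
        · rw [Fintype.mem_piFinset]
          intro i
          exact (digit_cases (had i i.isLt) (hbd i i.isLt) (hpd i i.isLt)).2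
        · rw [hΦ]
          simp only
          conv_rhs => rw [self_eq_sum_digits (M:ℤ) hMpos n p.1 ha0 ha1,
            self_eq_sum_digits (M:ℤ) hMpos n p.2 hb0 hb1]
          rw [← Finset.sum_sub_distrib]
          apply Finset.sum_congr rfl
          intro i hi
          rw [Finset.mem_range] at hi
          rw [dif_pos hi]
          ring
      · rintro ⟨f, hf, rfl⟩
        rw [Fintype.mem_piFinset] at hf
        set x : ℕ → ℤ := fun i => if h : i < n then (pick (f ⟨i,h⟩)).1 else 0 with hx
        set y : ℕ → ℤ := fun i => if h : i < n then (pick (f ⟨i,h⟩)).2 else 0 with hy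
        have hspec : ∀ i (hi : i < n), x i ∈ ({0,1,3}:Finset ℤ) ∧ y i ∈ ({0,1,3}:Finset ℤ)
            ∧ x i ≠ y i ∧ x i - y i = f ⟨i,hi⟩ := by
          intro i hi
          have := pick_spec (hf ⟨i,hi⟩)
          rw [hx, hy]
          simp only [dif_pos hi]
          exact this
        have hxbd : ∀ i < n, 0 ≤ x i ∧ x i < (M:ℤ) := fun i hi => Dbound _ (hspec i hi).1
        have hybd : ∀ i < n, 0 ≤ y i ∧ y i < (M:ℤ) := fun i hi => Dbound _ (hspec i hi).2.1
        set a := ∑ i ∈ range n, x i * (M:ℤ) ^ i with ha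
        set b := ∑ i ∈ range n, y i * (M:ℤ) ^ i with hb'
        have hdiga : ∀ i < n, a / (M:ℤ) ^ i % (M:ℤ) = x i :=
          fun i hi => digit_of_sum (M:ℤ) hMpos i n x hxbd hi
        have hdigb : ∀ i < n, b / (M:ℤ) ^ i % (M:ℤ) = y i :=
          fun i hi => digit_of_sum (M:ℤ) hMpos i n y hybd hi
        have haA : a ∈ A := (memA a).mpr ⟨(sum_bounds (M:ℤ) hMpos n x hxbd).1,
          (sum_bounds (M:ℤ) hMpos n x hxbd).2,
          fun i hi => by rw [hdiga i hi]; exact (hspec i hi).1⟩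
        have hbA : b ∈ A := (memA b).mpr ⟨(sum_bounds (M:ℤ) hMpos n y hybd).1,
          (sum_bounds (M:ℤ) hMpos n y hybd).2,
          fun i hi => by rw [hdigb i hi]; exact (hspec i hi).2.1⟩
        refine ⟨(a, b), (memG (a,b)).mpr ⟨haA, hbA, ?_⟩, ?_⟩
        · intro i hi
          simp only
          rw [hdiga i hi, hdigb i hi]
          exact (hspec i hi).2.2.1
        · show a - b = Φ f
          rw [ha, hb', hΦ, ← Finset.sum_sub_distrib]
          apply Finset.sum_congr rfl
          intro i hi
          rw [Finset.mem_range] at hi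
          rw [dif_pos hi, ← sub_mul, (hspec i hi).2.2.2]
    rw [himg, Finset.card_image_of_injOn, Fintype.card_piFinset]
    · simp [hS6]
    · intro f hf g hg hfg
      rw [Finset.mem_coe, Fintype.mem_piFinset] at hf hg
      have hzero := eq_zero_of_sum_eq_zero (M:ℤ) hMpos n
        (fun i => (if h : i < n then f ⟨i,h⟩ else 0) - (if h : i < n then g ⟨i,h⟩ else 0)) ?_ ?_
      · funext i
        have hz := hzero i i.isLt
        simp only [dif_pos i.isLt, Fin.eta] at hz
        omega
      · intro i hi
        have hfm := hf ⟨i,hi⟩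
        have hgm := hg ⟨i,hi⟩
        simp only [Finset.mem_insert, Finset.mem_singleton] at hfm hgm
        have hfb : -3 ≤ f ⟨i,hi⟩ ∧ f ⟨i,hi⟩ ≤ 3 := by rcases hfm with h|h|h|h|h|h <;> rw [h] <;> omega
        have hgb : -3 ≤ g ⟨i,hi⟩ ∧ g ⟨i,hi⟩ ≤ 3 := by rcases hgm with h|h|h|h|h|h <;> rw [h] <;> omega
        simp only [dif_pos hi, abs_lt]
        omega
      · have : ∀ i ∈ range n,
            ((if h : i < n then f ⟨i,h⟩ else 0) - (if h : i < n then g ⟨i,h⟩ else 0)) * (M:ℤ) ^ i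
            = (if h : i < n then f ⟨i,h⟩ else 0) * (M:ℤ) ^ i
              - (if h : i < n then g ⟨i,h⟩ else 0) * (M:ℤ) ^ i := by
          intro i _; ring
        rw [Finset.sum_congr rfl this, Finset.sum_sub_distrib]
        have := hfg
        rw [hΦ] at this
        simp only at this
        rw [this]
        ring
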